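/- Let t : Fin n → A × B with n ≥ 1 model a bag relation that does not satisfy the FD X→Y. Then τ(t) := (pdep(t) − pdepY)/(1 − pdepY) satisfies τ(t) = 1 − (Σ_a p₁(a)·h(Y∣a)) / h(Y), where h(Y∣a) := 1 − Σ_b p(b∣a)² and h(Y) := 1 − Σ_b p₂(b)². In particular, since t violates X→Y, t has at least two distinct Y-values and hence h(Y) > 0, so both sides are well-defined. (Equivalent logical-entropy formula for τ.) -/

import Mathlib

namespace AFD

open Finset

variable {A B : Type*}

/-- Number of indices with X-value `a`. -/
def c1 {n : ℕ} [DecidableEq A] (t : Fin n → A × B) (a : A) : ℕ :=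
  (Finset.univ.filter fun i => (t i).1 = a).card

/-- Number of indices with Y-value `b`. -/
def c2 {n : ℕ} [DecidableEq B] (t : Fin n → A × B) (b : B) : ℕ :=
  (Finset.univ.filter fun i => (t i).2 = b).card

/-- Number of indices with tuple value `(a, b)`. -/
def cnt {n : ℕ} [DecidableEq A] [DecidableEq B] (t : Fin n → A × B) (a : A) (b : B) : ℕ :=
  (Finset.univ.filter fun i => t i = (a, b)).card

/-- Marginal probability of X-value `a`. -/
noncomputable def p1 {n : ℕ} [DecidableEq A] (t : Fin n → A × B) (a : A) : ℝ :=
  (c1 t a : ℝ) / n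

/-- Marginal probability of Y-value `b`. -/
noncomputable def p2 {n : ℕ} [DecidableEq B] (t : Fin n → A × B) (b : B) : ℝ :=
  (c2 t b : ℝ) / n

/-- Joint probability of `(a, b)`. -/
noncomputable def pJ {n : ℕ} [DecidableEq A] [DecidableEq B] (t : Fin n → A × B)
    (a : A) (b : B) : ℝ :=
  (cnt t a b : ℝ) / n

/-- Conditional probability of Y-value `b` given X-value `a` (with the `0/0 = 0` convention,
which is automatic for real division in Lean). -/
noncomputable def pC {n : ℕ} [DecidableEq A] [DecidableEq B] (t : Fin n → A × B)
    (a : A) (b : B) : ℝ :=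
  pJ t a b / p1 t a

/-- The set of distinct X-values. -/
def domX {n : ℕ} [DecidableEq A] (t : Fin n → A × B) : Finset A :=
  Finset.univ.image fun i => (t i).1

/-- The set of distinct Y-values. -/
def domY {n : ℕ} [DecidableEq B] (t : Fin n → A × B) : Finset B :=
  Finset.univ.image fun i => (t i).2

/-- The set of distinct tuples. -/
def domXY {n : ℕ} [DecidableEq A] [DecidableEq B] (t : Fin n → A × B) : Finset (A × B) :=
  Finset.univ.image t

/-- The probabilistic dependency `pdep(X → Y)`. -/
noncomputable def pdep {n : ℕ} [DecidableEq A] [DecidableEq B] (t : Fin n → A × B) : ℝ :=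
  ∑ a ∈ domX t, p1 t a * ∑ b ∈ domY t, (pC t a b) ^ 2

/-- The probabilistic self-dependency `pdep(Y)`. -/
noncomputable def pdepY {n : ℕ} [DecidableEq B] (t : Fin n → A × B) : ℝ :=
  ∑ b ∈ domY t, (p2 t b) ^ 2

/-- The (X;Y)-permutation of `t` induced by the permutation `σ`. -/
def permRel {n : ℕ} (t : Fin n → A × B) (σ : Equiv.Perm (Fin n)) : Fin n → A × B :=
  fun i => ((t i).1, (t (σ i)).2)

/-- `t` satisfies the functional dependency X → Y. -/
def satFD {n : ℕ} (t : Fin n → A × B) : Prop :=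
  ∀ i j, (t i).1 = (t j).1 → (t i).2 = (t j).2

lemma sum_c1_eq {A B : Type*} [DecidableEq A] {n : ℕ} (t : Fin n → A × B) :
    ∑ a ∈ domX t, (c1 t a : ℝ) = n := by
  have := Finset.card_eq_sum_card_fiberwise
    (f := fun i => (t i).1) (s := Finset.univ) (t := domX t)
    (fun x _ => Finset.mem_image.mpr ⟨x, Finset.mem_univ x, rfl⟩)
  simp only [Finset.card_univ, Fintype.card_fin] at this
  rw [← Nat.cast_sum]
  exact_mod_cast congrArg (Nat.cast (R := ℝ)) this.symm

lemma sum_p1_eq_one {A B : Type*} [DecidableEq A] {n : ℕ} (hn : 1 ≤ n) (t : Fin n → A × B) :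
    ∑ a ∈ domX t, p1 t a = 1 := by
  have hn' : (n : ℝ) ≠ 0 := Nat.cast_ne_zero.mpr (by omega)
  simp only [p1, ← Finset.sum_div, sum_c1_eq, div_self hn']

lemma pdepY_lt_one {A B : Type*} [DecidableEq A] [DecidableEq B] {n : ℕ}
    (hn : 1 ≤ n) (t : Fin n → A × B) (h : ¬ satFD t) : pdepY t < 1 := by
  simp only [satFD] at h
  push_neg at h
  obtain ⟨i, j, _, hij⟩ := h
  have hn' : (0:ℝ) < n := by exact_mod_cast Nat.lt_of_lt_of_le Nat.zero_lt_one hn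
  have hle : ∀ b ∈ domY t, p2 t b ≤ 1 := by
    intro b _
    have : c2 t b ≤ n := by
      simpa [c2] using Finset.card_filter_le Finset.univ (fun i => (t i).2 = b)
    rw [p2, div_le_one hn']
    exact_mod_cast this
  have hnn : ∀ b ∈ domY t, 0 ≤ p2 t b := fun b _ => div_nonneg (Nat.cast_nonneg _) (le_of_lt hn')
  have key : ∀ b ∈ domY t, (p2 t b)^2 ≤ p2 t b := by
    intro b hb
    have := hle b hb; have := hnn b hb
    nlinarith
  have hmemi : (t i).2 ∈ domY t := Finset.mem_image.mpr ⟨i, Finset.mem_univ i, rfl⟩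
  have hstrict : (p2 t (t i).2)^2 < p2 t (t i).2 := by
    have hpos : 0 < p2 t (t i).2 := by
      rw [p2]
      apply div_pos _ hn'
      have : 0 < c2 t (t i).2 := Finset.card_pos.mpr ⟨i, by simp [c2]⟩
      exact_mod_cast this
    have hlt1 : p2 t (t i).2 < 1 := by
      rw [p2, div_lt_one hn']
      have : c2 t (t i).2 < n := by
        have hsub : (Finset.univ.filter fun k => (t k).2 = (t i).2) ⊂ Finset.univ := by
          rw [Finset.ssubset_univ_iff]
          intro hu
          have := Finset.mem_filter.mp (hu ▸ Finset.mem_univ j)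
          exact hij this.2.symm
        simpa [c2] using Finset.card_lt_card hsub
      exact_mod_cast this
    nlinarith
  have h1 : pdepY t < ∑ b ∈ domY t, p2 t b :=
    Finset.sum_lt_sum key ⟨(t i).2, hmemi, hstrict⟩
  have h2 : ∑ b ∈ domY t, p2 t b = 1 := by
    have hn0 : (n : ℝ) ≠ 0 := ne_of_gt hn'
    have := Finset.card_eq_sum_card_fiberwise
      (f := fun i => (t i).2) (s := Finset.univ) (t := domY t)
      (fun x _ => Finset.mem_image.mpr ⟨x, Finset.mem_univ x, rfl⟩)
    simp only [Finset.card_univ, Fintype.card_fin] at this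
    have hsum : ∑ b ∈ domY t, (c2 t b : ℝ) = n := by
      rw [← Nat.cast_sum]; exact_mod_cast congrArg (Nat.cast (R := ℝ)) this.symm
    simp only [p2, ← Finset.sum_div, hsum, div_self hn0]
  linarith


/-- Equivalent logical-entropy formula for τ, for relations violating the FD X→Y:
`τ(t) = 1 − (∑_a p₁(a)·h(Y∣a)) / h(Y)`, where `h(Y) = 1 − pdepY > 0` since `t`
has at least two distinct Y-values. -/
theorem tau_eq_one_sub_logical_entropy_ratio {A B : Type*} [DecidableEq A] [DecidableEq B]
    {n : ℕ} (hn : 1 ≤ n) (t : Fin n → A × B) (h : ¬ satFD t) :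
    0 < 1 - pdepY t ∧
    (pdep t - pdepY t) / (1 - pdepY t) =
      1 - (∑ a ∈ domX t, p1 t a * (1 - ∑ b ∈ domY t, (pC t a b) ^ 2)) / (1 - pdepY t) := by
  have hY := pdepY_lt_one hn t h
  have hpos : 0 < 1 - pdepY t := by linarith
  refine ⟨hpos, ?_⟩
  have hsum : ∑ a ∈ domX t, p1 t a * (1 - ∑ b ∈ domY t, (pC t a b) ^ 2)
      = 1 - pdep t := by
    simp only [mul_sub, mul_one, Finset.sum_sub_distrib, sum_p1_eq_one hn t, pdep]
  rw [hsum]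
  field_simp
  ring

end AFD
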